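/- Let y_1, …, y_m be nonnegative real numbers and let B_1, …, B_p be a partition of {1, …, m} into p nonempty blocks; set x_b = ∑_{i∈B_b} y_i for b = 1, …, p. Then for every continuous convex function f : ℝ → ℝ one has ∑_{b=1}^p f(x_b) + (m − p)·f(0) ≥ ∑_{i=1}^m f(y_i). -/

import Mathlib

/-- Superadditivity of a convex function on nonnegative reals. -/
lemma superadd_of_convex (f : ℝ → ℝ) (hconv : ConvexOn ℝ Set.univ f)
    {a b : ℝ} (ha : 0 ≤ a) (hb : 0 ≤ b) :
    f a + f b ≤ f (a + b) + f 0 := by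
  rcases eq_or_lt_of_le (add_nonneg ha hb) with h | h
  · have ha0 : a = 0 := by linarith [ha, hb]
    have hb0 : b = 0 := by linarith
    simp [ha0, hb0]
  · set s := a + b with hs
    have ht1 : a / s + b / s = 1 := by field_simp; exact hs.symm
    have h1 : f a ≤ (a / s) * f s + (b / s) * f 0 := by
      have h' := hconv.2 (Set.mem_univ s) (Set.mem_univ 0)
        (div_nonneg ha h.le) (div_nonneg hb h.le) ht1
      have e : a / s * s + b / s * 0 = a := by
        field_simp; ring
      rw [smul_eq_mul, smul_eq_mul, smul_eq_mul, smul_eq_mul, e] at h'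
      exact h'
    have h2 : f b ≤ (b / s) * f s + (a / s) * f 0 := by
      have h' := hconv.2 (Set.mem_univ s) (Set.mem_univ 0)
        (div_nonneg hb h.le) (div_nonneg ha h.le) (by linarith)
      have e : b / s * s + a / s * 0 = b := by
        field_simp; ring
      rw [smul_eq_mul, smul_eq_mul, smul_eq_mul, smul_eq_mul, e] at h'
      exact h'
    have : f a + f b ≤ (a / s + b / s) * f s + (a / s + b / s) * f 0 := by
      ring_nf; ring_nf at h1 h2; linarith
    simpa [ht1] using this

lemma block_bound {m : ℕ} (f : ℝ → ℝ) (hconv : ConvexOn ℝ Set.univ f)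
    (y : Fin m → ℝ) (hy : ∀ i, 0 ≤ y i) (s : Finset (Fin m)) (hs : s.Nonempty) :
    ∑ i ∈ s, f (y i) ≤ f (∑ i ∈ s, y i) + ((s.card : ℝ) - 1) * f 0 := by
  induction s using Finset.induction_on with
  | empty => exact absurd hs (by simp)
  | @insert a t hnot ih =>
    rcases t.eq_empty_or_nonempty with rfl | hte
    · simp
    · have hsum : 0 ≤ ∑ i ∈ t, y i := Finset.sum_nonneg fun i _ => hy i
      have h1 := ih hte
      have h2 := superadd_of_convex f hconv (hy a) hsum
      rw [Finset.sum_insert hnot, Finset.sum_insert hnot, Finset.card_insert_of_notMem hnot]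
      push_cast
      linarith

theorem stmt_2 (m p : ℕ) (hp : 0 < p)
    (y : Fin m → ℝ) (hy : ∀ i, 0 ≤ y i)
    (B : Fin p → Finset (Fin m))
    (hne : ∀ b, (B b).Nonempty)
    (hdisj : ∀ b₁ b₂, b₁ ≠ b₂ → Disjoint (B b₁) (B b₂))
    (hcover : ∀ i : Fin m, ∃ b, i ∈ B b)
    (x : Fin p → ℝ) (hx : ∀ b, x b = ∑ i ∈ B b, y i)
    (f : ℝ → ℝ) (hconv : ConvexOn ℝ Set.univ f) (hcont : Continuous f) :
    ∑ i, f (y i) ≤ ∑ b, f (x b) + ((m : ℝ) - p) * f 0 := by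
  have hpd : Set.PairwiseDisjoint (Finset.univ : Finset (Fin p)) B :=
    fun b₁ _ b₂ _ h => hdisj b₁ b₂ h
  have huniv : (Finset.univ : Finset (Fin p)).biUnion B = Finset.univ := by
    ext i
    simpa using hcover i
  have hcard : ∑ b, (B b).card = m := by
    have h := Finset.card_biUnion (s := (Finset.univ : Finset (Fin p))) (t := B)
      (fun b₁ _ b₂ _ h => hdisj b₁ b₂ h)
    rw [huniv] at h
    simpa using h.symm
  have hsplit : ∀ g : Fin m → ℝ, ∑ i, g i = ∑ b, ∑ i ∈ B b, g i := by
    intro g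
    rw [← huniv, Finset.sum_biUnion hpd]
  rw [hsplit (fun i => f (y i))]
  have hstep : ∀ b, ∑ i ∈ B b, f (y i) ≤ f (x b) + ((B b).card - 1) * f 0 := by
    intro b
    rw [hx b]
    exact block_bound f hconv y hy (B b) (hne b)
  calc ∑ b, ∑ i ∈ B b, f (y i)
      ≤ ∑ b, (f (x b) + ((B b).card - 1) * f 0) := Finset.sum_le_sum fun b _ => hstep b
    _ = ∑ b, f (x b) + ((m : ℝ) - p) * f 0 := by
        rw [Finset.sum_add_distrib, ← Finset.sum_mul]
        congr 2
        push_cast [← hcard]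
        rw [Finset.sum_sub_distrib]
        simp
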